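/- Let I₁, I₂, I₃ ⊂ ℝ be pairwise disjoint open intervals and U = I₁ × I₂ × I₃. If M : U → ℝ is C² and satisfies (x_i − x_j) ∂_i∂_j M − ∂_i M + ∂_j M = 0 on U for all 1 ≤ i < j ≤ 3, then there exist functions m₁, m₂, m₃ : ℝ → ℝ such that M(x₁,x₂,x₃) = m₁(x₁)/((x₁−x₂)(x₁−x₃)) + m₂(x₂)/((x₂−x₁)(x₂−x₃)) + m₃(x₃)/((x₃−x₁)(x₃−x₂)) for all (x₁,x₂,x₃) ∈ U. -/

import Mathlib

open Function
set_option maxRecDepth 40000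
set_option maxHeartbeats 2000000

lemma hasDerivAt_comp_update {g : (Fin 3 → ℝ) → ℝ} {G : (Fin 3 → ℝ) →L[ℝ] ℝ}
    {y : Fin 3 → ℝ} {k : Fin 3} {t : ℝ}
    (hg : HasFDerivAt g G (Function.update y k t)) :
    HasDerivAt (fun s => g (Function.update y k s)) (G (Pi.single k 1)) t := by
  have h1 : ∀ s : ℝ, Function.update y k s
      = Function.update y k t + (s - t) • (Pi.single k 1 : Fin 3 → ℝ) := by
    intro s; funext m
    rcases eq_or_ne m k with rfl | hm
    · simp
    · simp [Function.update_of_ne hm, Pi.single_eq_of_ne hm]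
  have h2 : HasDerivAt (fun s : ℝ => Function.update y k t + (s - t) • (Pi.single k 1 : Fin 3 → ℝ))
      (Pi.single k 1) t := by
    have := (((hasDerivAt_id t).sub_const t).smul_const (Pi.single k 1 : Fin 3 → ℝ)).const_add
      (Function.update y k t)
    simpa using this
  have h2' : HasDerivAt (Function.update y k) (Pi.single k 1) t := by
    have heq : (Function.update y k : ℝ → Fin 3 → ℝ)
        = fun s => Function.update y k t + (s - t) • (Pi.single k 1 : Fin 3 → ℝ) := funext h1
    rw [heq]; exact h2
  have h3 := hg.comp_hasDerivAt t h2'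
  simpa only [Function.comp_def] using h3

lemma const_of_zero_deriv {S : Set ℝ} (hS : S.OrdConnected) {h : ℝ → ℝ}
    (hd : ∀ t ∈ S, HasDerivAt h 0 t) {t₁ t₂ : ℝ} (h1 : t₁ ∈ S) (h2 : t₂ ∈ S) :
    h t₁ = h t₂ := by
  have main : ∀ u v : ℝ, u ∈ S → v ∈ S → u ≤ v → h v = h u := by
    intro u v hu hv huv
    have hsub : Set.Icc u v ⊆ S := hS.out hu hv
    exact constant_of_has_deriv_right_zero
      (fun t ht => (hd t (hsub ht)).continuousAt.continuousWithinAt)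
      (fun t ht => ((hd t (hsub (Set.Ico_subset_Icc_self ht))).hasDerivWithinAt))
      v (Set.right_mem_Icc.2 huv)
  rcases le_total t₁ t₂ with hle | hle
  · exact (main t₁ t₂ h1 h2 hle).symm
  · exact main t₂ t₁ h2 h1 hle



/-- The partial derivative of `f : ℝ³ → ℝ` in the `i`-th coordinate direction,
taken as a line (directional) derivative. -/
noncomputable def pd (i : Fin 3) (f : (Fin 3 → ℝ) → ℝ) (x : Fin 3 → ℝ) : ℝ :=
  lineDeriv ℝ f x (Pi.single i 1)

/-- **Darboux's general solution of the Euler–Poisson–Darboux system in three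
variables.** If `I₁, I₂, I₃` are pairwise disjoint open intervals, `U = I₁ × I₂ × I₃`,
and `M : U → ℝ` is `C²` and satisfies `(x i - x j) ∂ᵢ∂ⱼM - ∂ᵢM + ∂ⱼM = 0` on `U` for all
`i < j`, then there exist `m₁, m₂, m₃ : ℝ → ℝ` with
`M x = ∑ i, m i (x i) / ∏_{j ≠ i} (x i - x j)` on `U`. -/
theorem epd_general_solution
    (I : Fin 3 → Set ℝ) (hIo : ∀ i, IsOpen (I i)) (hIc : ∀ i, (I i).OrdConnected)
    (hdisj : ∀ i j : Fin 3, i ≠ j → Disjoint (I i) (I j))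
    (U : Set (Fin 3 → ℝ)) (hU : U = {x | ∀ i, x i ∈ I i})
    (M : (Fin 3 → ℝ) → ℝ) (hM : ContDiffOn ℝ 2 M U)
    (hepd : ∀ i j : Fin 3, i < j → ∀ x ∈ U,
      (x i - x j) * pd i (pd j M) x - pd i M x + pd j M x = 0) :
    ∃ m : Fin 3 → ℝ → ℝ, ∀ x ∈ U,
      M x = ∑ i : Fin 3, m i (x i) / ∏ j ∈ Finset.univ.erase i, (x i - x j) := by
  rcases Set.eq_empty_or_nonempty U with hUe | ⟨a, ha⟩
  · exact ⟨fun _ _ => 0, fun x hx => absurd (hUe ▸ hx) (Set.notMem_empty x)⟩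
  have hUo : IsOpen U := by
    rw [hU, show {x : Fin 3 → ℝ | ∀ i, x i ∈ I i} = Set.univ.pi I by
      ext y; simp [Set.mem_pi]]
    exact isOpen_set_pi Set.finite_univ fun i _ => hIo i
  have hmemI : ∀ x ∈ U, ∀ i, x i ∈ I i := by intro x hx; rw [hU] at hx; exact hx
  have hmem : ∀ x ∈ U, ∀ (k : Fin 3) (c : ℝ), c ∈ I k → Function.update x k c ∈ U := by
    intro x hx k c hc
    rw [hU]; intro i
    rcases eq_or_ne i k with rfl | hik
    · simpa using hc
    · simpa [Function.update_of_ne hik] using hmemI x hx i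
  have hne : ∀ x ∈ U, ∀ i j : Fin 3, i ≠ j → x i - x j ≠ 0 := by
    intro x hx i j hij
    refine sub_ne_zero.2 fun h => ?_
    exact Set.disjoint_left.1 (hdisj i j hij) (hmemI x hx i) (h ▸ hmemI x hx j)
  -- differentiability facts
  have hCAt : ∀ y ∈ U, ContDiffAt ℝ 2 M y := fun y hy => hM.contDiffAt (hUo.mem_nhds hy)
  have hd1 : ∀ y ∈ U, DifferentiableAt ℝ M y :=
    fun y hy => (hCAt y hy).differentiableAt (by norm_num)
  have hdF : ∀ y ∈ U, DifferentiableAt ℝ (fderiv ℝ M) y := by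
    intro y hy
    exact ((hCAt y hy).fderiv_right (m := 1) (by norm_num)).differentiableAt (by norm_num)
  have pdM_eq : ∀ (j : Fin 3), ∀ y ∈ U, pd j M y = fderiv ℝ M y (Pi.single j 1) :=
    fun j y hy => (hd1 y hy).lineDeriv_eq_fderiv
  have pd2_eq : ∀ (i j : Fin 3), ∀ y ∈ U,
      pd i (pd j M) y = fderiv ℝ (fderiv ℝ M) y (Pi.single i 1) (Pi.single j 1) := by
    intro i j y hy
    have hev : (pd j M) =ᶠ[nhds y] fun z => fderiv ℝ M z (Pi.single j 1) :=
      Filter.eventuallyEq_of_mem (hUo.mem_nhds hy) fun z hz => pdM_eq j z hz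
    have hder : HasFDerivAt (fun z => fderiv ℝ M z (Pi.single j 1))
        ((fderiv ℝ (fderiv ℝ M) y).flip (Pi.single j 1)) y := by
      have := (hdF y hy).hasFDerivAt.clm_apply (hasFDerivAt_const (Pi.single j 1 : Fin 3 → ℝ) y)
      simpa using this
    rw [show pd i (pd j M) y = lineDeriv ℝ (pd j M) y (Pi.single i 1) from rfl,
      hev.lineDeriv_eq, hder.differentiableAt.lineDeriv_eq_fderiv, hder.fderiv]
    rfl
  -- separation lemma
  have SEP : ∀ i j : Fin 3, i ≠ j →
      (∀ y ∈ U, (y i - y j) * pd i (pd j M) y - pd i M y + pd j M y = 0) →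
      ∀ x ∈ U,
        (x i - x j) * M x
          = (x i - a j) * M (Function.update x j (a j))
            + (a i - x j) * M (Function.update x i (a i))
            - (a i - a j) * M (Function.update (Function.update x i (a i)) j (a j)) := by
    intro i j hij hEPD x hx
    set g : (Fin 3 → ℝ) → ℝ :=
      fun y => (y i - y j) * fderiv ℝ M y (Pi.single j 1) - M y with hgdef
    have keyA : ∀ y ∈ U, ∀ t ∈ I i, HasDerivAt (fun s => g (Function.update y i s)) 0 t := by
      intro y hy t ht
      have hu : Function.update y i t ∈ U := hmem y hy i t ht
      set u := Function.update y i t with hudef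
      have h1 : HasFDerivAt (fun z : Fin 3 → ℝ => z i - z j)
          ((ContinuousLinearMap.proj i : (Fin 3 → ℝ) →L[ℝ] ℝ) - ContinuousLinearMap.proj j) u := by
        exact (ContinuousLinearMap.proj i : (Fin 3 → ℝ) →L[ℝ] ℝ).hasFDerivAt.sub
          (ContinuousLinearMap.proj j : (Fin 3 → ℝ) →L[ℝ] ℝ).hasFDerivAt
      have h2 : HasFDerivAt (fun z => fderiv ℝ M z (Pi.single j 1))
          ((fderiv ℝ (fderiv ℝ M) u).flip (Pi.single j 1)) u := by
        have := (hdF u hu).hasFDerivAt.clm_apply (hasFDerivAt_const (Pi.single j 1 : Fin 3 → ℝ) u)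
        simpa using this
      have h3 := (h1.mul h2).sub (hd1 u hu).hasFDerivAt
      have h4 := hasDerivAt_comp_update h3
      convert h4 using 1
      · rfl
      have e1 := hEPD u hu
      rw [pd2_eq i j u hu, pdM_eq i u hu, pdM_eq j u hu] at e1
      simp only [ContinuousLinearMap.sub_apply, ContinuousLinearMap.add_apply,
        ContinuousLinearMap.smul_apply, ContinuousLinearMap.flip_apply,
        ContinuousLinearMap.proj_apply, Pi.single_eq_same, Pi.single_eq_of_ne hij.symm,
        smul_eq_mul]
      linarith
    have gconst : ∀ y ∈ U, g y = g (Function.update y i (a i)) := by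
      intro y hy
      have h1 := const_of_zero_deriv (hIc i) (keyA y hy) (hmemI y hy i) (hmemI a ha i)
      simpa [Function.update_eq_self] using h1
    have keyB : ∀ y ∈ U, ∀ t ∈ I j, HasDerivAt
        (fun s => ((Function.update y j s) i - (Function.update y j s) j)
          * M (Function.update y j s)) (g (Function.update y j t)) t := by
      intro y hy t ht
      have hu : Function.update y j t ∈ U := hmem y hy j t ht
      set u := Function.update y j t with hudef
      have h1 : HasFDerivAt (fun z : Fin 3 → ℝ => z i - z j)
          ((ContinuousLinearMap.proj i : (Fin 3 → ℝ) →L[ℝ] ℝ) - ContinuousLinearMap.proj j) u := by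
        exact (ContinuousLinearMap.proj i : (Fin 3 → ℝ) →L[ℝ] ℝ).hasFDerivAt.sub
          (ContinuousLinearMap.proj j : (Fin 3 → ℝ) →L[ℝ] ℝ).hasFDerivAt
      have h3 := h1.mul (hd1 u hu).hasFDerivAt
      have h4 := hasDerivAt_comp_update h3
      convert h4 using 1
      · rfl
      simp only [hgdef, ContinuousLinearMap.add_apply, ContinuousLinearMap.sub_apply,
        ContinuousLinearMap.smul_apply, ContinuousLinearMap.proj_apply,
        Pi.single_eq_same, Pi.single_eq_of_ne hij, smul_eq_mul]
      ring
    have hz : Function.update x i (a i) ∈ U := hmem x hx i (a i) (hmemI a ha i)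
    set z := Function.update x i (a i) with hzdef
    have hphi : ∀ t ∈ I j, HasDerivAt (fun s =>
        (((Function.update x j s) i - (Function.update x j s) j) * M (Function.update x j s))
        - (((Function.update z j s) i - (Function.update z j s) j) * M (Function.update z j s)))
        0 t := by
      intro t ht
      have h1 := keyB x hx t ht
      have h2 := keyB z hz t ht
      have heq : Function.update z j t = Function.update (Function.update x j t) i (a i) := by
        rw [hzdef]; exact Function.update_comm hij (a i) t x
      have h3 : g (Function.update z j t) = g (Function.update x j t) := by
        rw [heq, ← gconst (Function.update x j t) (hmem x hx j t ht)]
      rw [h3] at h2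
      simpa [Pi.sub_def] using h1.sub h2
    have hfinal := const_of_zero_deriv (hIc j) hphi (hmemI x hx j) (hmemI a ha j)
    have e1 : Function.update x j (x j) = x := Function.update_eq_self j x
    have e2 : Function.update z j (x j) = z := by
      have : x j = z j := (Function.update_of_ne hij.symm _ _).symm
      rw [this]; exact Function.update_eq_self j z
    simp only [e1, e2] at hfinal
    simp only [hzdef, Function.update_self, Function.update_of_ne hij,
      Function.update_of_ne hij.symm] at hfinal ⊢
    linarith
  -- the explicit solution
  refine ⟨![fun t => (t - a 1) * (t - a 2) * M (Function.update a 0 t)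
      - (a 0 - a 2) * ((t - a 1) * M a),
    fun t => (t - a 0) * (t - a 2) * M (Function.update a 1 t)
      - (a 1 - a 2) * ((t - a 0) * M a),
    fun t => (t - a 0) * (t - a 1) * M (Function.update a 2 t)], ?_⟩
  intro x hx
  have hp1 : Function.update x 1 (a 1) ∈ U := hmem x hx 1 (a 1) (hmemI a ha 1)
  have hp0 : Function.update x 0 (a 0) ∈ U := hmem x hx 0 (a 0) (hmemI a ha 0)
  have E1 := SEP 0 1 (by decide) (hepd 0 1 (by decide)) x hx
  have E2 := SEP 0 2 (by decide) (hepd 0 2 (by decide)) (Function.update x 1 (a 1)) hp1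
  have E3 := SEP 1 2 (by decide) (hepd 1 2 (by decide)) (Function.update x 0 (a 0)) hp0
  have P1 : Function.update (Function.update x 0 (a 0)) 1 (a 1) = Function.update a 2 (x 2) := by
    funext m; fin_cases m <;> simp [Function.update]
  have P2 : Function.update (Function.update x 1 (a 1)) 2 (a 2) = Function.update a 0 (x 0) := by
    funext m; fin_cases m <;> simp [Function.update]
  have P3 : Function.update (Function.update x 1 (a 1)) 0 (a 0) = Function.update a 2 (x 2) := by
    funext m; fin_cases m <;> simp [Function.update]
  have P4 : Function.update (Function.update (Function.update x 1 (a 1)) 0 (a 0)) 2 (a 2) = a := by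
    funext m; fin_cases m <;> simp [Function.update]
  have P5 : Function.update (Function.update x 0 (a 0)) 2 (a 2) = Function.update a 1 (x 1) := by
    funext m; fin_cases m <;> simp [Function.update]
  have P7 : Function.update (Function.update (Function.update x 0 (a 0)) 1 (a 1)) 2 (a 2) = a := by
    funext m; fin_cases m <;> simp [Function.update]
  rw [P1] at E1
  rw [P2] at E2
  rw [P4] at E2
  rw [P3] at E2
  rw [P5] at E3
  rw [P7] at E3
  rw [P1] at E3
  simp only [Function.update_self, Function.update_of_ne (by decide : (0 : Fin 3) ≠ 1),
    Function.update_of_ne (by decide : (0 : Fin 3) ≠ 2),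
    Function.update_of_ne (by decide : (2 : Fin 3) ≠ 1),
    Function.update_of_ne (by decide : (1 : Fin 3) ≠ 0),
    Function.update_of_ne (by decide : (2 : Fin 3) ≠ 0),
    Function.update_of_ne (by decide : (1 : Fin 3) ≠ 2)] at E1 E2 E3
  have h01 := hne x hx 0 1 (by decide)
  have h02 := hne x hx 0 2 (by decide)
  have h12 := hne x hx 1 2 (by decide)
  have h10 := hne x hx 1 0 (by decide)
  have h20 := hne x hx 2 0 (by decide)
  have h21 := hne x hx 2 1 (by decide)
  rw [Fin.sum_univ_three]
  simp only [show (Finset.univ.erase (0 : Fin 3)) = {1, 2} from by decide,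
    show (Finset.univ.erase (1 : Fin 3)) = {0, 2} from by decide,
    show (Finset.univ.erase (2 : Fin 3)) = {0, 1} from by decide,
    Finset.prod_pair (by decide : (1 : Fin 3) ≠ 2),
    Finset.prod_pair (by decide : (0 : Fin 3) ≠ 2),
    Finset.prod_pair (by decide : (0 : Fin 3) ≠ 1),
    Matrix.cons_val_zero, Matrix.cons_val_one, Matrix.head_cons,
    Matrix.cons_val_two, Matrix.tail_cons]
  have key : M x * ((x 0 - x 1) * ((x 0 - x 2) * (x 1 - x 2))) =
      ((x 0 - a 1) * (x 0 - a 2) * M (Function.update a 0 (x 0))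
          - (a 0 - a 2) * ((x 0 - a 1) * M a)) * (x 1 - x 2)
        - ((x 1 - a 0) * (x 1 - a 2) * M (Function.update a 1 (x 1))
          - (a 1 - a 2) * ((x 1 - a 0) * M a)) * (x 0 - x 2)
        + ((x 2 - a 0) * (x 2 - a 1) * M (Function.update a 2 (x 2))) * (x 0 - x 1) := by
    linear_combination ((x 0 - x 2) * (x 1 - x 2)) * E1 + ((x 0 - a 1) * (x 1 - x 2)) * E2
      + ((a 0 - x 1) * (x 0 - x 2)) * E3
  rw [div_add_div _ _ (mul_ne_zero h01 h02) (mul_ne_zero h10 h12),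
    div_add_div _ _ (mul_ne_zero (mul_ne_zero h01 h02) (mul_ne_zero h10 h12))
      (mul_ne_zero h20 h21),
    eq_div_iff (mul_ne_zero (mul_ne_zero (mul_ne_zero h01 h02) (mul_ne_zero h10 h12))
      (mul_ne_zero h20 h21))]
  linear_combination ((x 1 - x 0) * ((x 2 - x 0) * (x 2 - x 1))) * key
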